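/- Let T > 0, a > 0, b > 0 be real numbers and R ∈ ℝ. The function g(x) := ((T − x)/T) · (R − log(1 + a/(1 + b x))) is concave on the interval [0, T]. -/

import Mathlib

open Real

/-- The half-duplex spectral efficiency
`g(x) = ((T − x)/T)·(R − log(1 + a/(1 + b x)))` is concave on `[0, T]`
for `T > 0`, `a > 0`, `b > 0` and any real `R`. -/
theorem stmt_8 (T a b R : ℝ) (hT : 0 < T) (ha : 0 < a) (hb : 0 < b) :
    ConcaveOn ℝ (Set.Icc (0 : ℝ) T)
      (fun x : ℝ => ((T - x) / T) * (R - Real.log (1 + a / (1 + b * x)))) := by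
  set g : ℝ → ℝ := fun x =>
    ((T - x) / T) * (R - Real.log (1 + a + b * x) + Real.log (1 + b * x)) with hgdef
  set g1 : ℝ → ℝ := fun x =>
    (-1 / T) * (R - Real.log (1 + a + b * x) + Real.log (1 + b * x))
      + ((T - x) / T) * (-(b / (1 + a + b * x)) + b / (1 + b * x)) with hg1def
  set g2 : ℝ → ℝ := fun x =>
    (-2 / T) * (b / (1 + b * x) - b / (1 + a + b * x))
      + ((T - x) / T) * (b ^ 2 / (1 + a + b * x) ^ 2 - b ^ 2 / (1 + b * x) ^ 2) with hg2def
  -- positivity of the denominators on [0, T]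
  have hp : ∀ x : ℝ, 0 ≤ x → 0 < 1 + b * x := fun x hx => by positivity
  have hq : ∀ x : ℝ, 0 ≤ x → 0 < 1 + a + b * x := fun x hx => by positivity
  -- first derivative
  have hu : ∀ x : ℝ, HasDerivAt (fun y => (T - y) / T) (-1 / T) x := by
    intro x
    have := ((hasDerivAt_const x T).sub (hasDerivAt_id x)).div_const T
    simpa using this
  have hlinp : ∀ x : ℝ, HasDerivAt (fun y => 1 + b * y) b x := by
    intro x
    simpa using ((hasDerivAt_id x).const_mul b).const_add 1
  have hlinq : ∀ x : ℝ, HasDerivAt (fun y => 1 + a + b * y) b x := by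
    intro x
    simpa using ((hasDerivAt_id x).const_mul b).const_add (1 + a)
  have hv : ∀ x : ℝ, 0 ≤ x →
      HasDerivAt (fun y => R - Real.log (1 + a + b * y) + Real.log (1 + b * y))
        (-(b / (1 + a + b * x)) + b / (1 + b * x)) x := by
    intro x hx
    have h1 : HasDerivAt (fun y => Real.log (1 + b * y)) (b / (1 + b * x)) x :=
      (hlinp x).log (hp x hx).ne'
    have h2 : HasDerivAt (fun y => Real.log (1 + a + b * y)) (b / (1 + a + b * x)) x :=
      (hlinq x).log (hq x hx).ne'
    simpa using ((hasDerivAt_const x R).fun_sub h2).fun_add h1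
  have hG : ∀ x : ℝ, 0 ≤ x → HasDerivAt g (g1 x) x := by
    intro x hx
    simpa [hg1def] using (hu x).fun_mul (hv x hx)
  -- second derivative
  have hw : ∀ x : ℝ, 0 ≤ x →
      HasDerivAt (fun y => -(b / (1 + a + b * y)) + b / (1 + b * y))
        (b * b / (1 + a + b * x) ^ 2 - b * b / (1 + b * x) ^ 2) x := by
    intro x hx
    have h1 : HasDerivAt (fun y => b / (1 + b * y))
        ((0 * (1 + b * x) - b * b) / (1 + b * x) ^ 2) x :=
      (hasDerivAt_const x b).div (hlinp x) (hp x hx).ne'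
    have h2 : HasDerivAt (fun y => b / (1 + a + b * y))
        ((0 * (1 + a + b * x) - b * b) / (1 + a + b * x) ^ 2) x :=
      (hasDerivAt_const x b).div (hlinq x) (hq x hx).ne'
    have := h2.fun_neg.fun_add h1
    refine this.congr_deriv ?_
    ring
  have hG1 : ∀ x : ℝ, 0 ≤ x → HasDerivAt g1 (g2 x) x := by
    intro x hx
    have h1 : HasDerivAt (fun y => (-1 / T) *
        (R - Real.log (1 + a + b * y) + Real.log (1 + b * y)))
        ((-1 / T) * (-(b / (1 + a + b * x)) + b / (1 + b * x))) x :=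
      (hv x hx).const_mul (-1 / T)
    have h2 := (hu x).fun_mul (hw x hx)
    have h := h1.fun_add h2
    have heq : (-1 / T) * (-(b / (1 + a + b * x)) + b / (1 + b * x))
        + ((-1 / T) * (-(b / (1 + a + b * x)) + b / (1 + b * x))
          + ((T - x) / T) * (b * b / (1 + a + b * x) ^ 2 - b * b / (1 + b * x) ^ 2))
        = g2 x := by
      simp only [hg2def]
      ring
    rw [hg1def]
    simpa [heq] using h
  -- concavity of the rewritten function
  have hIcc : interior (Set.Icc (0 : ℝ) T) = Set.Ioo 0 T := interior_Icc
  have hconc : ConcaveOn ℝ (Set.Icc (0 : ℝ) T) g := by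
    apply concaveOn_of_hasDerivWithinAt2_nonpos (f' := g1) (f'' := g2) (convex_Icc 0 T)
    · exact fun x hx => (hG x hx.1).continuousAt.continuousWithinAt
    · intro x hx
      rw [hIcc] at hx
      exact (hG x hx.1.le).hasDerivWithinAt
    · intro x hx
      rw [hIcc] at hx
      exact (hG1 x hx.1.le).hasDerivWithinAt
    · intro x hx
      rw [hIcc] at hx
      have hxp := hp x hx.1.le
      have hxq := hq x hx.1.le
      have hpq : 1 + b * x < 1 + a + b * x := by linarith
      have h1 : b / (1 + a + b * x) ≤ b / (1 + b * x) :=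
        div_le_div_of_nonneg_left hb.le hxp hpq.le
      have h2 : b ^ 2 / (1 + a + b * x) ^ 2 ≤ b ^ 2 / (1 + b * x) ^ 2 := by
        apply div_le_div_of_nonneg_left (by positivity) (by positivity)
        nlinarith
      have hA : (-2 / T) * (b / (1 + b * x) - b / (1 + a + b * x)) ≤ 0 := by
        apply mul_nonpos_of_nonpos_of_nonneg
        · have : (0:ℝ) < 2 / T := by positivity
          rw [neg_div]
          linarith
        · linarith
      have hB : ((T - x) / T) * (b ^ 2 / (1 + a + b * x) ^ 2 - b ^ 2 / (1 + b * x) ^ 2) ≤ 0 := by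
        apply mul_nonpos_of_nonneg_of_nonpos
        · apply div_nonneg (by linarith [hx.2]) hT.le
        · linarith
      simpa [hg2def] using add_nonpos hA hB
  -- transfer to the original function
  apply hconc.congr
  intro x hx
  have hxp := hp x hx.1
  have hxq := hq x hx.1
  have harg : 1 + a / (1 + b * x) = (1 + a + b * x) / (1 + b * x) := by
    field_simp
    ring
  simp only [hgdef, harg, Real.log_div hxq.ne' hxp.ne']
  ring
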